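/- Let X₁, X₂, ... be i.i.d. with |X₁| ≤ 2, E X₁ = 0, Var(X₁) = σ² ≤ 4, and for n ≥ 2 let V_n = (n/(n−1))(∑_{i=1}^n X_i² − (1/n)(∑_{i=1}^n X_i)²). Then there is an absolute constant K₃ such that for any 0 < δ < 1, with probability at least 1 − δ, simultaneously for all n ≥ ln(1/δ): nσ² ≤ K₃·(1 + ln(1/δ) + V_n). -/

import Mathlib

set_option linter.unusedSectionVars false
set_option maxHeartbeats 1000000

open MeasureTheory ProbabilityTheory Finset Real

namespace Stmt18Aux

lemma my_exp_neg_le (x : ℝ) (hx : 0 ≤ x) : Real.exp (-x) ≤ 1 - x + x^2 := by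
  have h1 : Real.exp (-x) * (1 + x) ≤ 1 := by
    have := Real.add_one_le_exp x
    calc Real.exp (-x) * (1 + x) ≤ Real.exp (-x) * Real.exp x := by
          apply mul_le_mul_of_nonneg_left _ (Real.exp_pos _).le
          linarith
      _ = 1 := by rw [← Real.exp_add]; simp
  nlinarith [Real.exp_pos (-x), sq_nonneg x]

lemma my_sum_two_mul (g : ℕ → ℝ) (m : ℕ) :
    ∑ i ∈ range (2*m), g i = ∑ k ∈ range m, (g (2*k) + g (2*k+1)) := by
  induction m with
  | zero => simp
  | succ m ih =>
    have h : 2 * (m+1) = (2*m + 1) + 1 := by ring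
    rw [h, sum_range_succ, sum_range_succ, ih, sum_range_succ]
    ring

lemma my_identity (x : ℕ → ℝ) (n : ℕ) (hn : 0 < n) :
    (∑ i ∈ range n, x i ^ 2) - (1/(n:ℝ)) * (∑ i ∈ range n, x i)^2
      = ∑ i ∈ range n, (x i - (∑ j ∈ range n, x j)/n)^2 := by
  have hn' : (n:ℝ) ≠ 0 := Nat.cast_ne_zero.mpr hn.ne'
  set s := ∑ j ∈ range n, x j with hs
  have h : ∀ i ∈ range n, (x i - s/n)^2 = x i ^2 - 2*(s/n)*x i + (s/n)^2 := by
    intro i _; ring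
  rw [sum_congr rfl h, sum_add_distrib, sum_sub_distrib, ← mul_sum, sum_const, card_range,
    nsmul_eq_mul]
  field_simp
  ring

lemma det_endgame (x : ℕ → ℝ) (σ2 L : ℝ) (hσ : 0 < σ2) (hσ4 : σ2 ≤ 4) (hL : 0 ≤ L)
    (hgood : ∀ k : ℕ,
      (3:ℝ)/4 * ((⌈2048 * (1 + L) / σ2⌉₊ * 2^k : ℕ) : ℝ) * σ2
        < ∑ j ∈ range (⌈2048 * (1 + L) / σ2⌉₊ * 2^k), (x (2*j) - x (2*j+1))^2/2)
    (n : ℕ) (hn2 : 2 ≤ n) :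
    (n : ℝ) * σ2 ≤ 5000 * (1 + L +
      ((n : ℝ) / ((n : ℝ) - 1)) *
        ((∑ i ∈ range n, x i ^ 2) - (1 / (n : ℝ)) * (∑ i ∈ range n, x i)^2)) := by
  set m₀ : ℕ := ⌈2048 * (1 + L) / σ2⌉₊ with hm₀def
  have hm₀pos : 0 < m₀ := Nat.ceil_pos.mpr (by positivity)
  have hm₀ge : 2048 * (1 + L) ≤ (m₀ : ℝ) * σ2 := by
    have := Nat.le_ceil (2048 * (1 + L) / σ2)
    rw [← hm₀def] at this
    calc 2048 * (1 + L) = (2048 * (1 + L) / σ2) * σ2 := by field_simp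
      _ ≤ (m₀ : ℝ) * σ2 := by nlinarith
  have hm₀le : (m₀ : ℝ) * σ2 ≤ 2048 * (1 + L) + 4 := by
    have h1 : (m₀ : ℝ) < 2048 * (1 + L) / σ2 + 1 :=
      Nat.ceil_lt_add_one (by positivity)
    have h2 : (m₀ : ℝ) * σ2 < (2048 * (1 + L) / σ2 + 1) * σ2 := by nlinarith
    have h3 : (2048 * (1 + L) / σ2 + 1) * σ2 = 2048 * (1 + L) + σ2 := by field_simp
    nlinarith
  have hn0 : (0:ℝ) < n := by positivity
  have hn1 : (1:ℝ) ≤ (n:ℝ) - 1 := by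
    have : (2:ℝ) ≤ n := by exact_mod_cast hn2
    linarith
  set Q := ∑ i ∈ range n, x i ^ 2 with hQ
  set S := ∑ i ∈ range n, x i with hS
  set D := Q - (1/(n:ℝ)) * S^2 with hD
  have hDid : D = ∑ i ∈ range n, (x i - S/n)^2 := my_identity x n (by omega)
  have hDnonneg : 0 ≤ D := by rw [hDid]; positivity
  have hVD : D ≤ ((n:ℝ)/((n:ℝ)-1)) * D := by
    have h1 : (1:ℝ) ≤ (n:ℝ)/((n:ℝ)-1) := by
      rw [le_div_iff₀ (by linarith)]; linarith
    exact le_mul_of_one_le_left hDnonneg h1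
  set m := n / 2 with hm
  have hmn : 2 * m ≤ n := by omega
  have hnm : n ≤ 2 * m + 1 := by omega
  have hTmD : ∑ j ∈ range m, (x (2*j) - x (2*j+1))^2/2 ≤ D := by
    rw [hDid]
    calc ∑ j ∈ range m, (x (2*j) - x (2*j+1))^2/2
        ≤ ∑ j ∈ range m, ((x (2*j) - S/n)^2 + (x (2*j+1) - S/n)^2) := by
          apply sum_le_sum
          intro j _
          nlinarith [sq_nonneg (x (2*j) + x (2*j+1) - 2*(S/n))]
      _ = ∑ i ∈ range (2*m), (x i - S/n)^2 :=
          (my_sum_two_mul (fun i => (x i - S/n)^2) m).symm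
      _ ≤ ∑ i ∈ range n, (x i - S/n)^2 := by
          apply sum_le_sum_of_subset_of_nonneg (range_subset_range.mpr hmn)
          intro i _ _; positivity
  clear_value Q S D
  by_cases hcase : m < m₀
  · have hnle : (n:ℝ) ≤ 2 * m₀ := by
      have : n ≤ 2 * m₀ := by omega
      exact_mod_cast this
    have h1 : (n:ℝ) * σ2 ≤ 2 * ((m₀:ℝ) * σ2) := by nlinarith
    have h2 : (n:ℝ) * σ2 ≤ 4096 * (1 + L) + 8 := by nlinarith
    have hV : 0 ≤ ((n:ℝ)/((n:ℝ)-1)) * D := le_trans hDnonneg hVD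
    nlinarith
  · push_neg at hcase
    set q := m / m₀ with hq
    have hq1 : 1 ≤ q := by
      rw [hq]; exact (Nat.one_le_div_iff hm₀pos).mpr hcase
    set k := Nat.log 2 q with hk
    have h2k : 2^k ≤ q := Nat.pow_log_le_self 2 (by omega)
    have h2k' : q < 2^(k+1) := Nat.lt_pow_succ_log_self (by norm_num) q
    set M := m₀ * 2^k with hM
    have hM1 : M ≤ m := by
      calc M = m₀ * 2^k := hM
        _ ≤ m₀ * q := Nat.mul_le_mul_left _ h2k
        _ ≤ m := by rw [hq, mul_comm]; exact Nat.div_mul_le_self m m₀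
    have hM2 : m < 2 * M := by
      have : m < 2^(k+1) * m₀ := (Nat.div_lt_iff_lt_mul hm₀pos).mp h2k'
      calc m < 2^(k+1) * m₀ := this
        _ = 2 * M := by rw [hM]; ring
    have hgoodk := hgood k
    rw [← hM] at hgoodk
    have hTM : ∑ j ∈ range M, (x (2*j) - x (2*j+1))^2/2
        ≤ ∑ j ∈ range m, (x (2*j) - x (2*j+1))^2/2 := by
      apply sum_le_sum_of_subset_of_nonneg (range_subset_range.mpr hM1)
      intro i _ _; positivity
    clear_value m₀ m q k M
    have hDlow : (3:ℝ)/4 * (M:ℝ) * σ2 ≤ D := le_trans (le_of_lt hgoodk) (le_trans hTM hTmD)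
    have hMm : (m:ℝ) < 2 * (M:ℝ) := by exact_mod_cast hM2
    have hm1 : 1 ≤ m := le_trans hm₀pos hcase
    have hnm' : (n:ℝ) ≤ 3 * (m:ℝ) := by
      have : n ≤ 3 * m := by omega
      exact_mod_cast this
    clear hgoodk hTM hTmD hgood hDid hD hQ hS hq hk hM hm hm₀def
    have hfin : (n:ℝ) * σ2 ≤ 8 * D := by nlinarith
    have hV0 : 0 ≤ ((n:ℝ)/((n:ℝ)-1)) * D := le_trans hDnonneg hVD
    linarith [hfin, hVD, hV0]

variable {Ω : Type} [MeasurableSpace Ω] {μ : Measure Ω} [IsProbabilityMeasure μ]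

lemma int_of_bdd {f : Ω → ℝ} (hf : Measurable f) (C : ℝ) (h : ∀ ω, |f ω| ≤ C) :
    Integrable f μ :=
  Integrable.mono' (integrable_const C) hf.aestronglyMeasurable (ae_of_all _ h)

noncomputable def Yf (X : ℕ → Ω → ℝ) (k : ℕ) (ω : Ω) : ℝ :=
  (X (2*k) ω - X (2*k+1) ω)^2 / 2

noncomputable def phiF (m : ℕ) : (((range (2*m) : Finset ℕ) : Type) → ℝ) → ℝ := fun x =>
  ∑ k ∈ (range m).attach,
    (x ⟨2*k.1, mem_range.mpr (by have := mem_range.mp k.2; omega)⟩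
      - x ⟨2*k.1+1, mem_range.mpr (by have := mem_range.mp k.2; omega)⟩)^2/2

noncomputable def psiF (m : ℕ) : ((({2*m, 2*m+1} : Finset ℕ) : Type) → ℝ) → ℝ := fun x =>
  (x ⟨2*m, by simp⟩ - x ⟨2*m+1, by simp⟩)^2/2

section
variable {X : ℕ → Ω → ℝ} (hmeas : ∀ i, Measurable (X i))
  (hindep : iIndepFun X μ)
  (hid : ∀ i, IdentDistrib (X i) (X 0) μ μ)
  (hbdd : ∀ i ω, |X i ω| ≤ 2) (hmean : μ[X 0] = 0)

include hmeas hbdd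

lemma hXmem (i : ℕ) : MemLp (X i) 2 μ := by
  refine (memLp_top_of_bound (hmeas i).aestronglyMeasurable 2 ?_).mono_exponent le_top
  exact ae_of_all _ fun ω => by simpa using hbdd i ω

lemma hXint (i : ℕ) : Integrable (X i) μ :=
  (hXmem hmeas hbdd i).integrable (by norm_num)

lemma hXXint (i j : ℕ) : Integrable (fun ω => X i ω * X j ω) μ := by
  refine int_of_bdd ((hmeas i).mul (hmeas j)) 4 fun ω => ?_
  have h1 := hbdd i ω; have h2 := hbdd j ω
  rw [abs_mul]
  nlinarith [abs_nonneg (X i ω), abs_nonneg (X j ω)]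

lemma hX2int (i : ℕ) : Integrable (fun ω => X i ω ^ 2) μ := by
  simpa [pow_two] using hXXint hmeas hbdd i i

omit hmeas hbdd

include hid hmean in
lemma hEX (i : ℕ) : μ[X i] = 0 := by rw [(hid i).integral_eq, hmean]

include hmeas hid hbdd hmean in
lemma hEX2 (i : ℕ) : μ[fun ω => X i ω ^ 2] = variance (X 0) μ := by
  have h1 : μ[fun ω => X i ω ^ 2] = μ[fun ω => X 0 ω ^ 2] :=
    ((hid i).comp (measurable_id.pow_const 2)).integral_eq
  rw [h1, variance_eq_sub (hXmem hmeas hbdd 0), hmean]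
  simp [Pi.pow_apply]

include hmeas hindep hid hbdd hmean in
lemma hEXY (i j : ℕ) (hij : i ≠ j) : μ[fun ω => X i ω * X j ω] = 0 := by
  have h := (hindep.indepFun hij).integral_mul_eq_mul_integral (hmeas i).aestronglyMeasurable
    (hmeas j).aestronglyMeasurable
  have h2 : μ[fun ω => X i ω * X j ω] = integral μ (X i * X j) := rfl
  rw [h2, h, hEX hid hmean i, zero_mul]

include hmeas in
lemma hYmeas (k : ℕ) : Measurable (Yf X k) :=
  (((hmeas _).sub (hmeas _)).pow_const 2).div_const 2

lemma hYnonneg (k : ℕ) (ω : Ω) : 0 ≤ Yf X k ω := by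
  unfold Yf; positivity

include hbdd in
lemma hYle (k : ℕ) (ω : Ω) : Yf X k ω ≤ 8 := by
  have h1 := abs_le.1 (hbdd (2*k) ω); have h2 := abs_le.1 (hbdd (2*k+1) ω)
  unfold Yf; nlinarith

include hmeas hbdd in
lemma hYint (k : ℕ) : Integrable (Yf X k) μ :=
  int_of_bdd (hYmeas hmeas k) 8 fun ω =>
    abs_le.2 ⟨by linarith [hYnonneg (X := X) k ω], hYle hbdd k ω⟩

include hmeas hbdd in
lemma hY2int (k : ℕ) : Integrable (fun ω => Yf X k ω ^ 2) μ :=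
  int_of_bdd ((hYmeas hmeas k).pow_const 2) 64 fun ω => by
    have := hYnonneg (X := X) k ω; have := hYle hbdd k ω
    rw [abs_le]; constructor <;> nlinarith

include hmeas hindep hid hbdd hmean in
lemma hEY (k : ℕ) : μ[Yf X k] = variance (X 0) μ := by
  set a := 2*k; set b := 2*k+1
  have hab : a ≠ b := by omega
  have e : Yf X k = fun ω =>
      (X a ω ^ 2 / 2 + X b ω ^ 2 / 2) - X a ω * X b ω := by
    funext ω; unfold Yf; ring
  have hFa : Integrable (fun ω => X a ω ^ 2 / 2) μ := (hX2int hmeas hbdd a).div_const 2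
  have hFb : Integrable (fun ω => X b ω ^ 2 / 2) μ := (hX2int hmeas hbdd b).div_const 2
  have hF : Integrable (fun ω => X a ω ^ 2 / 2 + X b ω ^ 2 / 2) μ := hFa.add hFb
  rw [e, integral_sub hF (hXXint hmeas hbdd a b), integral_add hFa hFb,
    hEXY hmeas hindep hid hbdd hmean a b hab]
  have ha : μ[fun ω => X a ω ^ 2 / 2] = variance (X 0) μ / 2 := by
    rw [integral_div, hEX2 hmeas hid hbdd hmean a]
  have hb : μ[fun ω => X b ω ^ 2 / 2] = variance (X 0) μ / 2 := by
    rw [integral_div, hEX2 hmeas hid hbdd hmean b]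
  rw [ha, hb]; ring

include hmeas hindep hid hbdd hmean in
lemma hEY2 (k : ℕ) : μ[fun ω => Yf X k ω ^ 2] ≤ 8 * variance (X 0) μ := by
  have h : μ[fun ω => Yf X k ω ^ 2] ≤ μ[fun ω => 8 * Yf X k ω] := by
    refine integral_mono (hY2int hmeas hbdd k) ((hYint hmeas hbdd k).const_mul 8) fun ω => ?_
    have := hYnonneg (X := X) k ω; have := hYle hbdd k ω
    nlinarith
  have h2 : μ[fun ω => 8 * Yf X k ω] = 8 * μ[Yf X k] := integral_const_mul 8 _
  rw [h2, hEY hmeas hindep hid hbdd hmean k] at h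
  exact h

include hmeas hindep hid hbdd hmean in
lemma hmgfY (k : ℕ) :
    mgf (Yf X k) μ (-(1/64)) ≤ exp (-(7/512) * variance (X 0) μ) := by
  have hσ : 0 ≤ variance (X 0) μ := variance_nonneg _ _
  have hint1 : Integrable (fun ω => exp (-(1/64) * Yf X k ω)) μ := by
    refine int_of_bdd (((hYmeas hmeas k).const_mul _).exp) 1 fun ω => ?_
    rw [abs_of_pos (exp_pos _)]
    calc exp (-(1/64) * Yf X k ω) ≤ exp 0 := by
          apply exp_le_exp.mpr; nlinarith [hYnonneg (X := X) k ω]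
      _ = 1 := exp_zero
  have hA : Integrable (fun ω => 1 - Yf X k ω / 64) μ :=
    (integrable_const 1).sub ((hYint hmeas hbdd k).div_const 64)
  have hint2 : Integrable (fun ω => 1 - Yf X k ω / 64 + Yf X k ω ^ 2 / 4096) μ :=
    hA.add ((hY2int hmeas hbdd k).div_const 4096)
  have hpt : ∀ ω, exp (-(1/64) * Yf X k ω) ≤ 1 - Yf X k ω / 64 + Yf X k ω ^ 2 / 4096 := by
    intro ω
    have h := my_exp_neg_le (Yf X k ω / 64) (by linarith [hYnonneg (X := X) k ω])
    calc exp (-(1/64) * Yf X k ω) = exp (-(Yf X k ω / 64)) := by ring_nf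
      _ ≤ 1 - Yf X k ω / 64 + (Yf X k ω / 64)^2 := h
      _ = 1 - Yf X k ω / 64 + Yf X k ω ^ 2 / 4096 := by ring
  have h1 : mgf (Yf X k) μ (-(1/64)) ≤ μ[fun ω => 1 - Yf X k ω / 64 + Yf X k ω ^ 2 / 4096] :=
    integral_mono hint1 hint2 hpt
  have h2 : μ[fun ω => 1 - Yf X k ω / 64 + Yf X k ω ^ 2 / 4096]
      = 1 - μ[Yf X k] / 64 + μ[fun ω => Yf X k ω ^ 2] / 4096 := by
    rw [integral_add hA ((hY2int hmeas hbdd k).div_const 4096),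
      integral_sub (integrable_const 1) ((hYint hmeas hbdd k).div_const 64),
      integral_div, integral_div, integral_const]
    simp
  rw [h2, hEY hmeas hindep hid hbdd hmean k] at h1
  have h3 := hEY2 hmeas hindep hid hbdd hmean k
  calc mgf (Yf X k) μ (-(1/64))
      ≤ 1 - variance (X 0) μ / 64 + (8 * variance (X 0) μ) / 4096 := by linarith
    _ = 1 + (-(7/512) * variance (X 0) μ) := by ring
    _ ≤ exp (-(7/512) * variance (X 0) μ) := by
        linarith [Real.add_one_le_exp (-(7/512) * variance (X 0) μ)]

include hmeas hindep in
lemma hTindep (m : ℕ) :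
    IndepFun (fun ω => ∑ k ∈ range m, Yf X k ω) (Yf X m) μ := by
  classical
  have hdisj : Disjoint (range (2*m)) ({2*m, 2*m+1} : Finset ℕ) := by
    rw [Finset.disjoint_left]
    intro i hiS hiT
    rw [mem_range] at hiS
    rw [mem_insert, mem_singleton] at hiT
    omega
  have base := hindep.indepFun_finset (range (2*m)) {2*m, 2*m+1} hdisj hmeas
  have hφ : Measurable (phiF m) := by
    apply Finset.measurable_sum
    intro k _
    apply Measurable.div_const
    apply Measurable.pow_const
    exact (measurable_pi_apply _).sub (measurable_pi_apply _)
  have hψ : Measurable (psiF m) := by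
    apply Measurable.div_const
    apply Measurable.pow_const
    exact (measurable_pi_apply _).sub (measurable_pi_apply _)
  have hcomp := base.comp hφ hψ
  have e1 : (phiF m ∘ fun a (i : (range (2*m) : Finset ℕ)) => X i a)
      = fun ω => ∑ k ∈ range m, Yf X k ω := by
    funext ω
    show ∑ k ∈ (range m).attach, (X (2*k.1) ω - X (2*k.1+1) ω)^2/2 = _
    rw [Finset.sum_attach (range m) (fun k => (X (2*k) ω - X (2*k+1) ω)^2/2)]
    rfl
  have e2 : (psiF m ∘ fun a (i : ({2*m, 2*m+1} : Finset ℕ)) => X i a) = Yf X m := rfl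
  rwa [e1, e2] at hcomp

include hmeas hindep hid hbdd hmean in
lemma hmgfT (m : ℕ) :
    mgf (fun ω => ∑ k ∈ range m, Yf X k ω) μ (-(1/64))
      ≤ exp ((m:ℝ) * (-(7/512) * variance (X 0) μ)) := by
  induction m with
  | zero =>
    have e : (fun ω : Ω => ∑ k ∈ range 0, Yf X k ω) = 0 := by funext ω; simp
    rw [e, mgf_zero_fun]
    simp
  | succ m ih =>
    have e : (fun ω : Ω => ∑ k ∈ range (m+1), Yf X k ω)
        = (fun ω => ∑ k ∈ range m, Yf X k ω) + Yf X m := by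
      funext ω; simp [sum_range_succ]
    have h1 : AEStronglyMeasurable (fun ω => exp (-(1/64) * ∑ k ∈ range m, Yf X k ω)) μ :=
      (((Finset.measurable_sum _ fun k _ => hYmeas hmeas k).const_mul _).exp).aestronglyMeasurable
    have h2 : AEStronglyMeasurable (fun ω => exp (-(1/64) * Yf X m ω)) μ :=
      (((hYmeas hmeas m).const_mul _).exp).aestronglyMeasurable
    rw [e, (hTindep hmeas hindep m).mgf_add h1 h2]
    calc mgf (fun ω => ∑ k ∈ range m, Yf X k ω) μ (-(1/64)) * mgf (Yf X m) μ (-(1/64))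
        ≤ exp ((m:ℝ) * (-(7/512) * variance (X 0) μ)) * exp (-(7/512) * variance (X 0) μ) :=
          mul_le_mul ih (hmgfY hmeas hindep hid hbdd hmean m) mgf_nonneg (exp_pos _).le
      _ = exp (((m:ℕ)+1 : ℝ) * (-(7/512) * variance (X 0) μ)) := by
          rw [← exp_add]; ring_nf
      _ = exp (((m+1 : ℕ) : ℝ) * (-(7/512) * variance (X 0) μ)) := by push_cast; ring_nf

include hmeas hindep hid hbdd hmean in
lemma hcher (m : ℕ) :
    μ {ω | (∑ k ∈ range m, Yf X k ω) ≤ 3/4 * (m:ℝ) * variance (X 0) μ}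
      ≤ ENNReal.ofReal (exp (-((m:ℝ) * variance (X 0) μ) / 512)) := by
  have hint : Integrable (fun ω => exp (-(1/64) * ∑ k ∈ range m, Yf X k ω)) μ := by
    refine int_of_bdd (((Finset.measurable_sum _ fun k _ => hYmeas hmeas k).const_mul _).exp) 1
      fun ω => ?_
    rw [abs_of_pos (exp_pos _)]
    calc exp (-(1/64) * ∑ k ∈ range m, Yf X k ω) ≤ exp 0 := by
          apply exp_le_exp.mpr
          have h : 0 ≤ ∑ k ∈ range m, Yf X k ω :=
            sum_nonneg fun k _ => hYnonneg (X := X) k ω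
          nlinarith
      _ = 1 := exp_zero
  have hch := measure_le_le_exp_mul_mgf (μ := μ) (X := fun ω => ∑ k ∈ range m, Yf X k ω)
    (3/4 * (m:ℝ) * variance (X 0) μ) (t := -(1/64)) (by norm_num) hint
  rw [ENNReal.le_ofReal_iff_toReal_le (measure_ne_top μ _) (exp_pos _).le]
  calc (μ {ω | (∑ k ∈ range m, Yf X k ω) ≤ 3/4 * (m:ℝ) * variance (X 0) μ}).toReal
      ≤ exp (-(-(1/64)) * (3/4 * (m:ℝ) * variance (X 0) μ))
          * mgf (fun ω => ∑ k ∈ range m, Yf X k ω) μ (-(1/64)) := hch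
    _ ≤ exp (-(-(1/64)) * (3/4 * (m:ℝ) * variance (X 0) μ))
          * exp ((m:ℝ) * (-(7/512) * variance (X 0) μ)) := by
        apply mul_le_mul_of_nonneg_left (hmgfT hmeas hindep hid hbdd hmean m) (exp_pos _).le
    _ = exp (-((m:ℝ) * variance (X 0) μ) / 512) := by
        rw [← exp_add]; ring_nf

end

end Stmt18Aux

open Stmt18Aux

/-- There is an absolute constant `K₃` such that for i.i.d. `X_i` with
`|X_i| ≤ 2`, mean zero and variance `σ² ≤ 4`, with probability at least `1 − δ`,
simultaneously for all `n ≥ ln(1/δ)` (with `n ≥ 2` so that `V_n` is defined):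
`nσ² ≤ K₃(1 + ln(1/δ) + V_n)`, where
`V_n = (n/(n−1))(∑_{i<n} X_i² − (1/n)(∑_{i<n} X_i)²)`. -/
theorem stmt18 :
    ∃ K₃ : ℝ, 0 < K₃ ∧
      ∀ (Ω : Type) [MeasurableSpace Ω] (μ : Measure Ω) [IsProbabilityMeasure μ]
        (X : ℕ → Ω → ℝ),
        (∀ i, Measurable (X i)) →
        iIndepFun X μ →
        (∀ i, IdentDistrib (X i) (X 0) μ μ) →
        (∀ i ω, |X i ω| ≤ 2) →
        μ[X 0] = 0 →
        variance (X 0) μ ≤ 4 →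
        ∀ δ : ℝ, 0 < δ → δ < 1 →
          ENNReal.ofReal (1 - δ) ≤
            μ {ω | ∀ n : ℕ, 2 ≤ n → Real.log (1 / δ) ≤ n →
                (n : ℝ) * variance (X 0) μ ≤
                  K₃ * (1 + Real.log (1 / δ) +
                    ((n : ℝ) / ((n : ℝ) - 1)) *
                      ((∑ i ∈ Finset.range n, (X i ω) ^ 2) -
                        (1 / (n : ℝ)) * (∑ i ∈ Finset.range n, X i ω) ^ 2))} := by
  refine ⟨5000, by norm_num, ?_⟩
  intro Ω _ μ _ X hmeas hindep hid hbdd hmean hvar δ hδ0 hδ1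
  set σ2 := variance (X 0) μ with hσ2def
  set L := Real.log (1/δ) with hLdef
  have hL0 : 0 < L := by
    apply Real.log_pos
    rw [lt_div_iff₀ hδ0]; linarith
  have hexpL : Real.exp (-L) = δ := by
    rw [hLdef, Real.exp_neg, Real.exp_log (by positivity), one_div, inv_inv]
  rcases eq_or_lt_of_le (variance_nonneg (X 0) μ) with hσ0 | hσpos
  · -- variance zero case
    have hsub : (Set.univ : Set Ω) ⊆ {ω | ∀ n : ℕ, 2 ≤ n → L ≤ n →
        (n : ℝ) * σ2 ≤ 5000 * (1 + L + ((n : ℝ) / ((n : ℝ) - 1)) *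
          ((∑ i ∈ range n, (X i ω) ^ 2) - (1 / (n : ℝ)) * (∑ i ∈ range n, X i ω) ^ 2))} := by
      intro ω _ n hn2 _
      have hn0 : (0:ℝ) < n := by positivity
      have hn1 : (1:ℝ) ≤ (n:ℝ) - 1 := by
        have : (2:ℝ) ≤ n := by exact_mod_cast hn2
        linarith
      have hD : 0 ≤ (∑ i ∈ range n, (X i ω) ^ 2) - (1/(n:ℝ)) * (∑ i ∈ range n, X i ω)^2 := by
        rw [my_identity (fun i => X i ω) n (by omega)]
        positivity
      have hV : 0 ≤ ((n : ℝ) / ((n : ℝ) - 1)) *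
          ((∑ i ∈ range n, (X i ω) ^ 2) - (1/(n:ℝ)) * (∑ i ∈ range n, X i ω)^2) :=
        mul_nonneg (by positivity) hD
      rw [hσ2def, ← hσ0]
      nlinarith
    calc ENNReal.ofReal (1-δ) ≤ 1 := ENNReal.ofReal_le_one.mpr (by linarith)
      _ = μ Set.univ := measure_univ.symm
      _ ≤ _ := measure_mono hsub
  · set m₀ : ℕ := ⌈2048 * (1 + L) / σ2⌉₊ with hm₀def
    set bad : ℕ → Set Ω := fun k =>
      {ω | (∑ j ∈ range (m₀ * 2^k), Yf X j ω) ≤ 3/4 * ((m₀ * 2^k : ℕ):ℝ) * σ2} with hbaddef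
    have hbadmeas : ∀ k, MeasurableSet (bad k) := fun k =>
      measurableSet_le (Finset.measurable_sum _ fun j _ => hYmeas hmeas j) measurable_const
    have hbadk : ∀ k, μ (bad k) ≤
        ENNReal.ofReal (exp (-(((m₀ * 2^k : ℕ):ℝ) * σ2) / 512)) := fun k =>
      hcher hmeas hindep hid hbdd hmean (m₀ * 2^k)
    set ρ : ℝ := exp (-(4*(1+L))) with hρdef
    have hρ0 : 0 ≤ ρ := (exp_pos _).le
    have hρ1 : ρ < 1 := by
      have h : ρ < exp 0 := by
        rw [hρdef]
        exact Real.exp_lt_exp.mpr (by nlinarith)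
      simpa using h
    have hρeq : ρ = exp (-4) * δ^4 := by
      rw [hρdef, show -(4*(1+L)) = -4 + ((4:ℕ):ℝ) * (-L) by push_cast; ring, exp_add,
        Real.exp_nat_mul, hexpL]
    have hexp4 : (50:ℝ) ≤ exp 4 := by
      have h1 := Real.exp_one_gt_d9
      have h2 : exp 4 = exp 1 ^ (4:ℕ) := by
        rw [← Real.exp_nat_mul]; norm_num
      calc (50:ℝ) ≤ 2.7182818283^(4:ℕ) := by norm_num
        _ ≤ exp 1 ^ (4:ℕ) := by
            apply pow_le_pow_left₀ (by norm_num) h1.le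
        _ = exp 4 := h2.symm
    have hρsmall : ρ ≤ δ / 50 := by
      have he4 : exp (-4) ≤ 1/50 := by
        rw [Real.exp_neg]
        rw [inv_le_comm₀ (Real.exp_pos 4) (by norm_num)]
        linarith
      have hδ4 : δ^4 ≤ δ := pow_le_of_le_one hδ0.le hδ1.le (by norm_num)
      calc ρ = exp (-4) * δ^4 := hρeq
        _ ≤ (1/50) * δ := by nlinarith [Real.exp_pos (-4), pow_nonneg hδ0.le 4]
        _ = δ / 50 := by ring
    have hm₀ge : 2048 * (1 + L) ≤ (m₀ : ℝ) * σ2 := by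
      have h := Nat.le_ceil (2048 * (1 + L) / σ2)
      rw [← hm₀def] at h
      calc 2048 * (1 + L) = (2048 * (1 + L) / σ2) * σ2 := (div_mul_cancel₀ _ hσpos.ne').symm
        _ ≤ (m₀ : ℝ) * σ2 := by nlinarith
    have hgeomle : ∀ k : ℕ, exp (-(((m₀ * 2^k : ℕ):ℝ) * σ2) / 512) ≤ ρ^(k+1) := by
      intro k
      have h2k : ((k:ℝ) + 1) ≤ 2^k := by
        have := @Nat.lt_two_pow_self k
        have h' : (k + 1 : ℕ) ≤ 2^k := this
        exact_mod_cast h'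
      have hρpow : ρ^(k+1) = exp (((k+1 : ℕ):ℝ) * (-(4*(1+L)))) := by
        rw [hρdef, Real.exp_nat_mul]
      rw [hρpow]
      apply Real.exp_le_exp.mpr
      push_cast
      have h2kpos : (0:ℝ) < 2^k := by positivity
      nlinarith [mul_le_mul_of_nonneg_left hm₀ge (le_of_lt h2kpos),
        mul_le_mul_of_nonneg_right h2k (by nlinarith : (0:ℝ) ≤ 4*(1+L))]
    have hsumgeo : Summable (fun k : ℕ => ρ^(k+1)) := by
      have e : (fun k : ℕ => ρ^(k+1)) = fun k => ρ * ρ^k := by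
        funext k; rw [pow_succ]; ring
      rw [e]
      exact (summable_geometric_of_lt_one hρ0 hρ1).mul_left ρ
    have htsum : (∑' k : ℕ, ρ^(k+1)) ≤ δ := by
      have e : (fun k : ℕ => ρ^(k+1)) = fun k => ρ * ρ^k := by
        funext k; rw [pow_succ]; ring
      rw [e, tsum_mul_left, tsum_geometric_of_lt_one hρ0 hρ1]
      have h1ρ : (49:ℝ)/50 ≤ 1 - ρ := by nlinarith
      rw [← div_eq_mul_inv, div_le_iff₀ (by linarith)]
      nlinarith
    have hunion : μ (⋃ k, bad k) ≤ ENNReal.ofReal δ := by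
      calc μ (⋃ k, bad k) ≤ ∑' k, μ (bad k) := measure_iUnion_le _
        _ ≤ ∑' k, ENNReal.ofReal (ρ^(k+1)) :=
            ENNReal.tsum_le_tsum fun k =>
              le_trans (hbadk k) (ENNReal.ofReal_le_ofReal (hgeomle k))
        _ = ENNReal.ofReal (∑' k, ρ^(k+1)) :=
            (ENNReal.ofReal_tsum_of_nonneg (fun k => pow_nonneg hρ0 _) hsumgeo).symm
        _ ≤ ENNReal.ofReal δ := ENNReal.ofReal_le_ofReal htsum
    have hsub : (⋃ k, bad k)ᶜ ⊆ {ω | ∀ n : ℕ, 2 ≤ n → L ≤ n →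
        (n : ℝ) * σ2 ≤ 5000 * (1 + L + ((n : ℝ) / ((n : ℝ) - 1)) *
          ((∑ i ∈ range n, (X i ω) ^ 2) - (1 / (n : ℝ)) * (∑ i ∈ range n, X i ω) ^ 2))} := by
      intro ω hω n hn2 _
      simp only [Set.mem_compl_iff, Set.mem_iUnion, not_exists, hbaddef, Set.mem_setOf_eq] at hω
      have hgood : ∀ k : ℕ,
          (3:ℝ)/4 * ((⌈2048 * (1 + L) / σ2⌉₊ * 2^k : ℕ) : ℝ) * σ2
            < ∑ j ∈ range (⌈2048 * (1 + L) / σ2⌉₊ * 2^k),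
                ((fun i => X i ω) (2*j) - (fun i => X i ω) (2*j+1))^2/2 := by
        intro k
        have h := hω k
        rw [← hm₀def]
        exact lt_of_not_ge h
      exact det_endgame (fun i => X i ω) σ2 L hσpos hvar hL0.le hgood n hn2
    calc ENNReal.ofReal (1-δ) = 1 - ENNReal.ofReal δ := by
          rw [← ENNReal.ofReal_one, ← ENNReal.ofReal_sub _ hδ0.le]
      _ ≤ 1 - μ (⋃ k, bad k) := tsub_le_tsub_left hunion 1
      _ = μ ((⋃ k, bad k)ᶜ) := (prob_compl_eq_one_sub (MeasurableSet.iUnion hbadmeas)).symm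
      _ ≤ _ := measure_mono hsub
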